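/- Every element of the wave cone Λ of stationary IPM has one of the following three forms: (i) (ρ, (ρ/2)(e − (0,1)), ℓ(e − (0,1))) with ρ ≠ 0, e ∈ S¹ \ {(0,1)}, ℓ ∈ ℝ; (ii) (ρ, 0, (m₁, 0)) with ρ ≠ 0, m₁ ∈ ℝ; (iii) (0, 0, m) with m ∈ ℝ²; and conversely every such element lies in Λ. -/

import Mathlib

open MeasureTheory

noncomputable section

/-- Euclidean dot product on ℝ². -/
def dot (a b : ℝ × ℝ) : ℝ := a.1 * b.1 + a.2 * b.2

/-- Rotation by 90°: (a,b)⊥ = (−b, a). -/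
def perp (a : ℝ × ℝ) : ℝ × ℝ := (-a.2, a.1)

/-- Euclidean norm on ℝ². -/
def nrm (a : ℝ × ℝ) : ℝ := Real.sqrt (a.1 ^ 2 + a.2 ^ 2)

/-- State space ℝ × ℝ² × ℝ² of (ρ, v, m). -/
abbrev Pt := ℝ × (ℝ × ℝ) × (ℝ × ℝ)

/-- The wave cone Λ of stationary IPM. -/
def Lam : Set Pt :=
  {z | dot z.2.1 z.2.1 + z.1 * z.2.1.2 = 0 ∧ dot z.2.2 (perp z.2.1) = 0 ∧
       dot z.2.2 (z.2.1 + (0, z.1)) = 0}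

/-- The constitutive set K. -/
def Kset : Set Pt := {z | |z.1| = 1 ∧ z.2.2 = z.1 • z.2.1}

def G2 (z : Pt) : ℝ := dot z.2.2 (perp z.2.1)

def G3 (z : Pt) : ℝ :=
  -dot (z.2.1 - z.2.2) (z.2.1 + (0, 1 + z.1)) + dot (z.2.1 - z.2.2) (z.2.1 - z.2.2) / 2

def G4 (z : Pt) : ℝ :=
  -dot (z.2.1 + z.2.2) (z.2.1 - (0, 1 - z.1)) + dot (z.2.1 + z.2.2) (z.2.1 + z.2.2) / 2

theorem stmt7 (z : Pt) :
    z ∈ Lam ↔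
      ((∃ ρ : ℝ, ∃ e : ℝ × ℝ, ∃ l : ℝ, ρ ≠ 0 ∧ nrm e = 1 ∧ e ≠ (0, 1) ∧
          z = (ρ, (ρ / 2) • (e - (0, 1)), l • (e - (0, 1)))) ∨
        (∃ ρ m₁ : ℝ, ρ ≠ 0 ∧ z = (ρ, 0, (m₁, 0))) ∨
        (∃ m : ℝ × ℝ, z = (0, 0, m))) := by
  obtain ⟨ρ, ⟨v1, v2⟩, ⟨m1, m2⟩⟩ := z
  simp only [Lam, Set.mem_setOf_eq, dot, perp, Prod.mk.injEq, Prod.ext_iff,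
    Prod.smul_def, smul_eq_mul, Prod.fst_sub, Prod.snd_sub, Prod.fst_add, Prod.snd_add,
    Prod.mk_sub_mk, Prod.smul_mk, Prod.mk_add_mk, Prod.fst_zero, Prod.snd_zero]
  constructor
  · rintro ⟨h1, h2, h3⟩
    by_cases hρ : ρ = 0
    · subst hρ
      have hv1 : v1 = 0 := by nlinarith [sq_nonneg v1, sq_nonneg v2]
      have hv2 : v2 = 0 := by nlinarith [sq_nonneg v1, sq_nonneg v2]
      exact Or.inr (Or.inr ⟨(m1, m2), by simp [hv1, hv2]⟩)
    · by_cases hv : v1 = 0 ∧ v2 = 0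
      · refine Or.inr (Or.inl ⟨ρ, m1, hρ, ?_⟩)
        have hm2 : m2 = 0 := by
          have := h3
          rw [hv.1, hv.2] at this
          have : m2 * ρ = 0 := by linarith
          rcases mul_eq_zero.mp this with h | h
          · exact h
          · exact absurd h hρ
        simp [hv.1, hv.2, hm2]
      · have hvne : v1 ^ 2 + v2 ^ 2 ≠ 0 := by
          intro h
          exact hv ⟨by nlinarith [sq_nonneg v1, sq_nonneg v2],
            by nlinarith [sq_nonneg v1, sq_nonneg v2]⟩
        refine Or.inl ⟨ρ, (2 / ρ * v1, 2 / ρ * v2 + 1),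
          ρ * (m1 * v1 + m2 * v2) / (2 * (v1 ^ 2 + v2 ^ 2)), hρ, ?_, ?_, ?_⟩
        · unfold nrm
          have : (2 / ρ * v1) ^ 2 + (2 / ρ * v2 + 1) ^ 2 = 1 := by
            field_simp
            nlinarith [h1]
          rw [this, Real.sqrt_one]
        · intro he
          rw [Prod.mk.injEq] at he
          apply hv
          constructor
          · have := he.1
            field_simp at this
            linarith
          · have := he.2
            have h2' : 2 / ρ * v2 = 0 := by linarith
            field_simp at h2'
            linarith
        · have hmv : m2 * v1 = m1 * v2 := by linarith
          refine ⟨rfl, ⟨by field_simp; ring, by field_simp; ring⟩, ?_, ?_⟩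
          · field_simp
            linear_combination -2 * v2 * hmv
          · field_simp
            linear_combination 2 * v1 * hmv
  · rintro (⟨ρ, ⟨e1, e2⟩, l, hρ, he, hne, hz⟩ | ⟨ρ, m₁, hρ, hz⟩ | ⟨⟨a, b⟩, hz⟩)
    · have he2 : e1 ^ 2 + e2 ^ 2 = 1 := by
        have h0 : (0:ℝ) ≤ e1 ^ 2 + e2 ^ 2 := by positivity
        have := he
        unfold nrm at this
        nlinarith [Real.sq_sqrt h0, this]
      obtain ⟨h1, ⟨h2a, h2b⟩, h3a, h3b⟩ := hz
      subst h1
      simp only at h2a h2b h3a h3b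
      subst h2a; subst h2b; subst h3a; subst h3b
      refine ⟨by linear_combination (ρ^2/4) * he2, by ring, by linear_combination (l*ρ/2) * he2⟩
    · obtain ⟨h1, ⟨h2a, h2b⟩, h3a, h3b⟩ := hz
      subst h1; subst h2a; subst h2b; subst h3a; subst h3b
      norm_num
    · obtain ⟨h1, ⟨h2a, h2b⟩, h3a, h3b⟩ := hz
      subst h1; subst h2a; subst h2b; subst h3a; subst h3b
      norm_num
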